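/- For the RK-RR variance sequence defined by v_0 = 0 and v_{t+1} = μ(I - a_{i_t} a_{i_t}^T/||a_{i_t}||^2) v_t + μ(b_{i_t} - a_{i_t}^T x_μ) a_{i_t}/||a_{i_t}||^2 - (1-μ)x_μ, with i_t sampled with probability ||a_{i_t}||^2/||A||_F^2, the following hold: E[v_t] = 0 for all t, and E||v_t||^2 ≤ (μ^2/(1-μ^2)) ||b - A x_μ||^2 / ||A||_F^2. -/

import Mathlib

open Matrix Finset
noncomputable section

/-- Squared Euclidean norm of a vector. -/
def vnormSq {k : ℕ} (x : Fin k → ℝ) : ℝ := ∑ i, x i ^ 2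

/-- Squared Frobenius norm of a matrix. -/
def frobSq {n d : ℕ} (A : Matrix (Fin n) (Fin d) ℝ) : ℝ := ∑ i, vnormSq (A i)

/-- Row sampling probability ‖a_i‖²/‖A‖_F² used by randomized Kaczmarz. -/
def rowProb {n d : ℕ} (A : Matrix (Fin n) (Fin d) ℝ) (i : Fin n) : ℝ := vnormSq (A i) / frobSq A

/-- Spectral norm (ℓ²-operator norm) of a matrix. -/
def matSpectralNorm {n d : ℕ} (M : Matrix (Fin n) (Fin d) ℝ) : ℝ :=
  ‖LinearMap.toContinuousLinearMap (Matrix.toEuclideanLin M)‖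

/-- The four Penrose conditions characterizing the Moore–Penrose pseudoinverse. -/
def IsMoorePenrose {n d : ℕ} (A : Matrix (Fin n) (Fin d) ℝ) (Ap : Matrix (Fin d) (Fin n) ℝ) : Prop :=
  A * Ap * A = A ∧ Ap * A * Ap = Ap ∧ (A * Ap)ᵀ = A * Ap ∧ (Ap * A)ᵀ = Ap * A

/-- Demmel condition number κ_dem = ‖A⁺‖ ‖A‖_F. -/
def kdem {n d : ℕ} (A : Matrix (Fin n) (Fin d) ℝ) (Ap : Matrix (Fin d) (Fin n) ℝ) : ℝ :=
  matSpectralNorm Ap * Real.sqrt (frobSq A)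

/-- One randomized Kaczmarz update using row i. -/
def rkStep {n d : ℕ} (A : Matrix (Fin n) (Fin d) ℝ) (b : Fin n → ℝ) (i : Fin n) (x : Fin d → ℝ) :
    Fin d → ℝ := x + ((b i - A i ⬝ᵥ x) / vnormSq (A i)) • A i

/-- Randomized Kaczmarz iterates along a fixed path ω of row indices. -/
def rkSeq {n d : ℕ} (A : Matrix (Fin n) (Fin d) ℝ) (b : Fin n → ℝ) (x0 : Fin d → ℝ)
    (ω : ℕ → Fin n) : ℕ → Fin d → ℝ
  | 0 => x0
  | t + 1 => rkStep A b (ω t) (rkSeq A b x0 ω t)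

/-- Extend a finite path of indices to an infinite one. -/
def extendPath {n T : ℕ} [NeZero n] (ω : Fin T → Fin n) : ℕ → Fin n :=
  fun s => if h : s < T then ω ⟨s, h⟩ else 0

/-- Probability of a finite path of i.i.d. row indices. -/
def pathWeight {n d T : ℕ} (A : Matrix (Fin n) (Fin d) ℝ) (ω : Fin T → Fin n) : ℝ :=
  ∏ t, rowProb A (ω t)

/-- The expected one-step Kaczmarz contraction matrix I - AᵀA/‖A‖_F². -/
def kacMat {n d : ℕ} (A : Matrix (Fin n) (Fin d) ℝ) : Matrix (Fin d) (Fin d) ℝ :=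
  1 - (frobSq A)⁻¹ • (Aᵀ * A)

/-- x lies in the row space range(Aᵀ). -/
def inRowSpace {n d : ℕ} (A : Matrix (Fin n) (Fin d) ℝ) (x : Fin d → ℝ) : Prop :=
  ∃ u : Fin n → ℝ, x = Aᵀ *ᵥ u

/-- RK-RR iterates: Kaczmarz step followed by weight decay by μ. -/
def rrSeq {n d : ℕ} (A : Matrix (Fin n) (Fin d) ℝ) (b : Fin n → ℝ) (μ : ℝ) (x0 : Fin d → ℝ)
    (ω : ℕ → Fin n) : ℕ → Fin d → ℝ
  | 0 => x0
  | t + 1 => μ • rkStep A b (ω t) (rrSeq A b μ x0 ω t)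

/-- Orthogonal projection step (I - a aᵀ/‖a‖²) x for row a = A i. -/
def projStep {n d : ℕ} (A : Matrix (Fin n) (Fin d) ℝ) (i : Fin n) (x : Fin d → ℝ) : Fin d → ℝ :=
  x - ((A i ⬝ᵥ x) / vnormSq (A i)) • A i

/-- RK-RR bias sequence m_{t+1} = μ (I - a aᵀ/‖a‖²) m_t. -/
def biasSeq {n d : ℕ} (A : Matrix (Fin n) (Fin d) ℝ) (μ : ℝ) (m0 : Fin d → ℝ)
    (ω : ℕ → Fin n) : ℕ → Fin d → ℝ
  | 0 => m0
  | t + 1 => μ • projStep A (ω t) (biasSeq A μ m0 ω t)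

/-- RK-RR variance sequence v_{t+1} = μ(I - aaᵀ/‖a‖²)v_t + μ (b_i - aᵀx_μ)a/‖a‖² - (1-μ)x_μ. -/
def varSeq {n d : ℕ} (A : Matrix (Fin n) (Fin d) ℝ) (b : Fin n → ℝ) (μ : ℝ) (xmu : Fin d → ℝ)
    (ω : ℕ → Fin n) : ℕ → Fin d → ℝ
  | 0 => 0
  | t + 1 => μ • projStep A (ω t) (varSeq A b μ xmu ω t)
      + (μ * ((b (ω t) - A (ω t) ⬝ᵥ xmu) / vnormSq (A (ω t)))) • A (ω t)
      - (1 - μ) • xmu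

/-- Covariance matrix Σ = I_m + v 1_m 1_mᵀ. -/
def covM (m : ℕ) (v : ℝ) : Matrix (Fin m) (Fin m) ℝ := 1 + v • Matrix.of fun _ _ => 1

/-- Block Σ_{S,T} of the covariance matrix Σ = I + v 1 1ᵀ. -/
def subBlock {m : ℕ} (v : ℝ) (S T : Finset (Fin m)) : Matrix ↥S ↥T ℝ :=
  (covM m v).submatrix (fun i => i.1) (fun j => j.1)

/-- A deterministic adaptive algorithm that accesses at most t entries of b
(given full access to A) and outputs an estimate of the least-squares solution. -/
structure RowAccessAlg (d t : ℕ) where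
  query : (n : ℕ) → Matrix (Fin n) (Fin d) ℝ → (j : Fin t) → (Fin (j : ℕ) → ℝ) → Fin n
  output : (n : ℕ) → Matrix (Fin n) (Fin d) ℝ → (Fin t → ℝ) → Fin d → ℝ

/-- The successive answers to the algorithm's adaptive queries. -/
def RowAccessAlg.answers {d t : ℕ} (alg : RowAccessAlg d t) (n : ℕ)
    (A : Matrix (Fin n) (Fin d) ℝ) (b : Fin n → ℝ) : (j : ℕ) → j < t → ℝ
  | j, h => b (alg.query n A ⟨j, h⟩ fun i => alg.answers n A b i (i.isLt.trans h))
  termination_by j _ => j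

/-- The algorithm's output estimate on the problem (A, b). -/
def RowAccessAlg.run {d t : ℕ} (alg : RowAccessAlg d t) (n : ℕ)
    (A : Matrix (Fin n) (Fin d) ℝ) (b : Fin n → ℝ) : Fin d → ℝ :=
  alg.output n A fun j => alg.answers n A b j j.isLt

section RKRRHelpers

lemma vnormSq_eq_dot {k : ℕ} (x : Fin k → ℝ) : vnormSq x = x ⬝ᵥ x := by
  simp [vnormSq, dotProduct, sq]

lemma vnormSq_nonneg {k : ℕ} (x : Fin k → ℝ) : 0 ≤ vnormSq x :=
  Finset.sum_nonneg fun _ _ => sq_nonneg _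

lemma vnormSq_pos {k : ℕ} {x : Fin k → ℝ} (hx : x ≠ 0) : 0 < vnormSq x := by
  rcases (vnormSq_nonneg x).lt_or_eq with h | h
  · exact h
  · exfalso; apply hx; funext i
    have := (Finset.sum_eq_zero_iff_of_nonneg (fun i _ => sq_nonneg (x i))).mp h.symm i (mem_univ i)
    exact (pow_eq_zero_iff (by norm_num)).mp this

lemma frobSq_pos {n d : ℕ} [NeZero n] (A : Matrix (Fin n) (Fin d) ℝ) (hrows : ∀ i, A i ≠ 0) :
    0 < frobSq A :=
  Finset.sum_pos (fun i _ => vnormSq_pos (hrows i)) Finset.univ_nonempty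

lemma rowProb_nonneg {n d : ℕ} (A : Matrix (Fin n) (Fin d) ℝ) (i : Fin n) :
    0 ≤ rowProb A i :=
  div_nonneg (vnormSq_nonneg _) (Finset.sum_nonneg fun _ _ => vnormSq_nonneg _)

lemma sum_rowProb {n d : ℕ} [NeZero n] (A : Matrix (Fin n) (Fin d) ℝ) (hrows : ∀ i, A i ≠ 0) :
    ∑ i, rowProb A i = 1 := by
  unfold rowProb
  rw [← Finset.sum_div]
  exact div_self (frobSq_pos A hrows).ne'

lemma sum_snoc {n T : ℕ} {M : Type*} [AddCommMonoid M] (f : (Fin (T+1) → Fin n) → M) :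
    ∑ ω : Fin (T+1) → Fin n, f ω = ∑ ω : Fin T → Fin n, ∑ i : Fin n, f (Fin.snoc ω i) := by
  rw [← Fintype.sum_prod_type (f := fun (p : (Fin T → Fin n) × Fin n) => f (Fin.snoc p.1 p.2))]
  exact (Fintype.sum_equiv ((Equiv.prodComm _ _).trans (Fin.snocEquiv fun _ => Fin n))
    _ _ (fun p => rfl)).symm

lemma pathWeight_snoc {n d T : ℕ} (A : Matrix (Fin n) (Fin d) ℝ) (ω : Fin T → Fin n) (i : Fin n) :
    pathWeight A (Fin.snoc ω i) = pathWeight A ω * rowProb A i := by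
  unfold pathWeight
  rw [Fin.prod_univ_castSucc]
  simp

lemma pathWeight_nonneg {n d T : ℕ} (A : Matrix (Fin n) (Fin d) ℝ) (ω : Fin T → Fin n) :
    0 ≤ pathWeight A ω :=
  Finset.prod_nonneg fun t _ => rowProb_nonneg A (ω t)

lemma sum_pathWeight {n d : ℕ} [NeZero n] (A : Matrix (Fin n) (Fin d) ℝ)
    (hrows : ∀ i, A i ≠ 0) : ∀ T, ∑ ω : Fin T → Fin n, pathWeight A ω = 1 := by
  intro T
  induction T with
  | zero => simp [pathWeight]
  | succ T ih =>
    rw [sum_snoc]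
    simp only [pathWeight_snoc, ← Finset.mul_sum, sum_rowProb A hrows, mul_one]
    exact ih

lemma extendPath_snoc_lt {n T : ℕ} [NeZero n] (ω : Fin T → Fin n) (i : Fin n) {s : ℕ}
    (hs : s < T) : extendPath (Fin.snoc ω i) s = extendPath ω s := by
  unfold extendPath
  rw [dif_pos (Nat.lt_succ_of_lt hs), dif_pos hs]
  exact @Fin.snoc_castSucc T (fun _ => Fin n) i ω ⟨s, hs⟩

lemma extendPath_snoc_last {n T : ℕ} [NeZero n] (ω : Fin T → Fin n) (i : Fin n) :
    extendPath (Fin.snoc ω i) T = i := by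
  unfold extendPath
  rw [dif_pos (Nat.lt_succ_self T)]
  exact @Fin.snoc_last T (fun _ => Fin n) i ω

lemma varSeq_congr {n d : ℕ} (A : Matrix (Fin n) (Fin d) ℝ) (b : Fin n → ℝ) (μ : ℝ)
    (xmu : Fin d → ℝ) (ω₁ ω₂ : ℕ → Fin n) :
    ∀ t, (∀ s, s < t → ω₁ s = ω₂ s) → varSeq A b μ xmu ω₁ t = varSeq A b μ xmu ω₂ t := by
  intro t
  induction t with
  | zero => intro _; rfl
  | succ t ih =>
    intro h
    simp only [varSeq]
    rw [ih (fun s hs => h s (Nat.lt_succ_of_lt hs)), h t (Nat.lt_succ_self t)]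

lemma varSeq_extend_snoc {n d T : ℕ} [NeZero n] (A : Matrix (Fin n) (Fin d) ℝ) (b : Fin n → ℝ)
    (μ : ℝ) (xmu : Fin d → ℝ) (ω : Fin T → Fin n) (i : Fin n) :
    varSeq A b μ xmu (extendPath (Fin.snoc ω i)) (T+1)
      = μ • projStep A i (varSeq A b μ xmu (extendPath ω) T)
        + (μ * ((b i - A i ⬝ᵥ xmu) / vnormSq (A i))) • A i - (1 - μ) • xmu := by
  simp only [varSeq]
  rw [extendPath_snoc_last,
    varSeq_congr A b μ xmu _ _ T (fun s hs => extendPath_snoc_lt ω i hs)]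

end RKRRHelpers

section RKRRCore

lemma projStep_dot {n d : ℕ} (A : Matrix (Fin n) (Fin d) ℝ) {i : Fin n} (h : A i ≠ 0)
    (v : Fin d → ℝ) : projStep A i v ⬝ᵥ A i = 0 := by
  have hv := (vnormSq_pos h).ne'
  simp only [projStep, sub_dotProduct, smul_dotProduct, smul_eq_mul]
  rw [← vnormSq_eq_dot, dotProduct_comm]
  field_simp
  ring

lemma vnormSq_projStep {n d : ℕ} (A : Matrix (Fin n) (Fin d) ℝ) {i : Fin n} (h : A i ≠ 0)
    (v : Fin d → ℝ) :
    vnormSq (projStep A i v) = vnormSq v - (A i ⬝ᵥ v)^2 / vnormSq (A i) := by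
  have hv := (vnormSq_pos h).ne'
  rw [vnormSq_eq_dot, vnormSq_eq_dot]
  simp only [projStep, sub_dotProduct, dotProduct_sub, smul_dotProduct, dotProduct_smul,
    smul_eq_mul]
  rw [dotProduct_comm v (A i), ← vnormSq_eq_dot]
  field_simp
  rw [show A i ⬝ᵥ A i = vnormSq (A i) from (vnormSq_eq_dot _).symm]
  ring

lemma vnormSq_projStep_le {n d : ℕ} (A : Matrix (Fin n) (Fin d) ℝ) {i : Fin n} (h : A i ≠ 0)
    (v : Fin d → ℝ) : vnormSq (projStep A i v) ≤ vnormSq v := by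
  rw [vnormSq_projStep A h]
  have : 0 ≤ (A i ⬝ᵥ v)^2 / vnormSq (A i) := div_nonneg (sq_nonneg _) (vnormSq_nonneg _)
  linarith

lemma step_normSq {n d : ℕ} (A : Matrix (Fin n) (Fin d) ℝ) {i : Fin n} (h : A i ≠ 0)
    (μ r : ℝ) (v : Fin d → ℝ) :
    vnormSq (μ • projStep A i v + (μ * (r / vnormSq (A i))) • A i)
      = μ^2 * vnormSq (projStep A i v) + μ^2 * (r^2 / vnormSq (A i)) := by
  have hv := (vnormSq_pos h).ne'
  have h1 := projStep_dot A h v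
  have h2 : A i ⬝ᵥ projStep A i v = 0 := by rw [dotProduct_comm]; exact h1
  rw [vnormSq_eq_dot]
  simp only [add_dotProduct, dotProduct_add, smul_dotProduct, dotProduct_smul, smul_eq_mul,
    h1, h2, mul_zero, add_zero, zero_add]
  rw [← vnormSq_eq_dot, ← vnormSq_eq_dot]
  field_simp

lemma vnormSq_add_dot {k : ℕ} (x y : Fin k → ℝ) :
    vnormSq x = vnormSq (x + y) - 2 * (x ⬝ᵥ y) - vnormSq y := by
  simp only [vnormSq_eq_dot, add_dotProduct, dotProduct_add]
  rw [dotProduct_comm y x]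
  ring

lemma sum_rowProb_res {n d : ℕ} [NeZero n] (A : Matrix (Fin n) (Fin d) ℝ)
    (hrows : ∀ i, A i ≠ 0) (b : Fin n → ℝ) (xmu : Fin d → ℝ) :
    ∑ i, rowProb A i * ((b i - A i ⬝ᵥ xmu)^2 / vnormSq (A i))
      = vnormSq (b - A *ᵥ xmu) / frobSq A := by
  have hF := (frobSq_pos A hrows).ne'
  have hres : vnormSq (b - A *ᵥ xmu) = ∑ i, (b i - A i ⬝ᵥ xmu)^2 := by
    simp [vnormSq, Matrix.mulVec]
  rw [hres, Finset.sum_div]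
  refine Finset.sum_congr rfl fun i _ => ?_
  have hv := (vnormSq_pos (hrows i)).ne'
  unfold rowProb
  field_simp

lemma step_mean {n d : ℕ} [NeZero n] (A : Matrix (Fin n) (Fin d) ℝ) (b : Fin n → ℝ)
    (hrows : ∀ i, A i ≠ 0) (μ : ℝ) (hμ0 : 0 < μ)
    (lam : ℝ) (hlam : lam = (1 - μ) / μ * frobSq A)
    (xmu : Fin d → ℝ) (hxmu : Aᵀ *ᵥ (b - A *ᵥ xmu) = lam • xmu)
    (v : Fin d → ℝ) :
    ∑ i, rowProb A i • (μ • projStep A i v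
        + (μ * ((b i - A i ⬝ᵥ xmu) / vnormSq (A i))) • A i - (1 - μ) • xmu)
      = μ • v - (μ / frobSq A) • (Aᵀ *ᵥ (A *ᵥ v)) := by
  have hF := (frobSq_pos A hrows).ne'
  funext j
  have hres : ∑ i, (b i - A i ⬝ᵥ xmu) * A i j = lam * xmu j := by
    have := congrFun hxmu j
    simp only [Matrix.mulVec, dotProduct, Matrix.transpose_apply, Pi.sub_apply,
      Pi.smul_apply, smul_eq_mul] at this
    rw [← this]
    exact Finset.sum_congr rfl fun i _ => by simp only [dotProduct]; ring
  have hAAv : (Aᵀ *ᵥ (A *ᵥ v)) j = ∑ i, (A i ⬝ᵥ v) * A i j := by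
    simp only [Matrix.mulVec, dotProduct, Matrix.transpose_apply]
    exact Finset.sum_congr rfl fun i _ => by ring
  simp only [Finset.sum_apply, Pi.smul_apply, Pi.add_apply, Pi.sub_apply, smul_eq_mul,
    projStep]
  have key : ∀ i : Fin n, rowProb A i * (μ * (v j - (A i ⬝ᵥ v) / vnormSq (A i) * A i j)
        + μ * ((b i - A i ⬝ᵥ xmu) / vnormSq (A i)) * A i j - (1 - μ) * xmu j)
      = rowProb A i * (μ * v j) - (μ / frobSq A) * ((A i ⬝ᵥ v) * A i j)
        + (μ / frobSq A) * ((b i - A i ⬝ᵥ xmu) * A i j)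
        - rowProb A i * ((1 - μ) * xmu j) := by
    intro i
    have hv := (vnormSq_pos (hrows i)).ne'
    unfold rowProb
    field_simp
  rw [Finset.sum_congr rfl fun i _ => key i]
  rw [Finset.sum_sub_distrib, Finset.sum_add_distrib, Finset.sum_sub_distrib,
    ← Finset.sum_mul, ← Finset.mul_sum, ← Finset.mul_sum, ← Finset.sum_mul,
    sum_rowProb A hrows, hres, hAAv]
  rw [hlam]
  field_simp
  ring

end RKRRCore

lemma mean_zero {n d : ℕ} [NeZero n] (A : Matrix (Fin n) (Fin d) ℝ) (b : Fin n → ℝ)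
    (hrows : ∀ i, A i ≠ 0) (μ : ℝ) (hμ0 : 0 < μ)
    (lam : ℝ) (hlam : lam = (1 - μ) / μ * frobSq A)
    (xmu : Fin d → ℝ) (hxmu : Aᵀ *ᵥ (b - A *ᵥ xmu) = lam • xmu) :
    ∀ T : ℕ, ∑ ω : Fin T → Fin n, pathWeight A ω • varSeq A b μ xmu (extendPath ω) T
      = (0 : Fin d → ℝ) := by
  intro T
  induction T with
  | zero => simp [varSeq]
  | succ T ih =>
    rw [sum_snoc]
    have hstep : ∀ ω : Fin T → Fin n,
        ∑ i, pathWeight A (Fin.snoc ω i) • varSeq A b μ xmu (extendPath (Fin.snoc ω i)) (T+1)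
        = μ • (pathWeight A ω • varSeq A b μ xmu (extendPath ω) T)
          - (μ / frobSq A) • (Aᵀ *ᵥ (A *ᵥ (pathWeight A ω • varSeq A b μ xmu (extendPath ω) T))) := by
      intro ω
      have : ∀ i : Fin n, pathWeight A (Fin.snoc ω i) • varSeq A b μ xmu (extendPath (Fin.snoc ω i)) (T+1)
          = pathWeight A ω • (rowProb A i • (μ • projStep A i (varSeq A b μ xmu (extendPath ω) T)
              + (μ * ((b i - A i ⬝ᵥ xmu) / vnormSq (A i))) • A i - (1 - μ) • xmu)) := by
        intro i
        rw [pathWeight_snoc, varSeq_extend_snoc, mul_smul]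
      rw [Finset.sum_congr rfl fun i _ => this i, ← Finset.smul_sum,
        step_mean A b hrows μ hμ0 lam hlam xmu hxmu, smul_sub, smul_comm,
        Matrix.mulVec_smul, Matrix.mulVec_smul, smul_comm (pathWeight A ω) (μ / frobSq A)]
    rw [Finset.sum_congr rfl fun ω _ => hstep ω, Finset.sum_sub_distrib, ← Finset.smul_sum]
    have h3 : ∑ ω : Fin T → Fin n,
        Aᵀ *ᵥ (A *ᵥ (pathWeight A ω • varSeq A b μ xmu (extendPath ω) T))
        = Aᵀ *ᵥ (A *ᵥ ∑ ω : Fin T → Fin n, pathWeight A ω • varSeq A b μ xmu (extendPath ω) T) := by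
      have h4 := map_sum ((Matrix.mulVecLin Aᵀ).comp (Matrix.mulVecLin A))
          (fun ω : Fin T → Fin n => pathWeight A ω • varSeq A b μ xmu (extendPath ω) T)
          Finset.univ
      simp only [LinearMap.comp_apply, Matrix.mulVecLin_apply] at h4
      exact h4.symm
    rw [← Finset.smul_sum, h3, ih]
    simp

lemma sum_dot {k : ℕ} {ι : Type*} [Fintype ι] (f : ι → Fin k → ℝ) (c : Fin k → ℝ) :
    (∑ x, f x) ⬝ᵥ c = ∑ x, f x ⬝ᵥ c := by
  simp only [dotProduct, Finset.sum_apply, Finset.sum_mul]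
  exact Finset.sum_comm

lemma var_bound {n d : ℕ} [NeZero n] (A : Matrix (Fin n) (Fin d) ℝ) (b : Fin n → ℝ)
    (hrows : ∀ i, A i ≠ 0) (μ : ℝ) (hμ0 : 0 < μ) (hμ1 : μ < 1)
    (lam : ℝ) (hlam : lam = (1 - μ) / μ * frobSq A)
    (xmu : Fin d → ℝ) (hxmu : Aᵀ *ᵥ (b - A *ᵥ xmu) = lam • xmu) :
    ∀ T : ℕ, ∑ ω : Fin T → Fin n,
        pathWeight A ω * vnormSq (varSeq A b μ xmu (extendPath ω) T)
      ≤ μ ^ 2 / (1 - μ ^ 2) * (vnormSq (b - A *ᵥ xmu) / frobSq A) := by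
  have hF := frobSq_pos A hrows
  have hC : 0 ≤ vnormSq (b - A *ᵥ xmu) / frobSq A :=
    div_nonneg (vnormSq_nonneg _) hF.le
  have h1μ : 0 < 1 - μ ^ 2 := by nlinarith
  intro T
  induction T with
  | zero =>
    have hz : vnormSq (0 : Fin d → ℝ) = 0 := by simp [vnormSq]
    simp only [varSeq, hz, mul_zero, Finset.sum_const_zero]
    positivity
  | succ T ih =>
    have hmean := mean_zero A b hrows μ hμ0 lam hlam xmu hxmu (T+1)
    -- Step 1: drop the recentering term using mean zero
    have hdrop : ∑ ω : Fin (T+1) → Fin n,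
          pathWeight A ω * vnormSq (varSeq A b μ xmu (extendPath ω) (T+1))
        ≤ ∑ ω : Fin (T+1) → Fin n, pathWeight A ω *
            vnormSq (varSeq A b μ xmu (extendPath ω) (T+1) + (1 - μ) • xmu) := by
      have hexp : ∀ ω : Fin (T+1) → Fin n,
          pathWeight A ω * vnormSq (varSeq A b μ xmu (extendPath ω) (T+1))
          = pathWeight A ω * vnormSq (varSeq A b μ xmu (extendPath ω) (T+1) + (1 - μ) • xmu)
            - 2 * ((pathWeight A ω • varSeq A b μ xmu (extendPath ω) (T+1)) ⬝ᵥ ((1 - μ) • xmu))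
            - pathWeight A ω * vnormSq ((1 - μ) • xmu) := by
        intro ω
        rw [vnormSq_add_dot (varSeq A b μ xmu (extendPath ω) (T+1)) ((1 - μ) • xmu),
          smul_dotProduct, smul_eq_mul]
        ring
      rw [Finset.sum_congr rfl fun ω _ => hexp ω, Finset.sum_sub_distrib,
        Finset.sum_sub_distrib]
      have hz : ∑ ω : Fin (T+1) → Fin n,
          (pathWeight A ω • varSeq A b μ xmu (extendPath ω) (T+1)) ⬝ᵥ ((1 - μ) • xmu) = 0 := by
        rw [← sum_dot, hmean, zero_dotProduct]
      rw [← Finset.mul_sum, hz, mul_zero, sub_zero]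
      have hnn : 0 ≤ ∑ ω : Fin (T+1) → Fin n, pathWeight A ω * vnormSq ((1 - μ) • xmu) :=
        Finset.sum_nonneg fun ω _ => mul_nonneg (pathWeight_nonneg A ω) (vnormSq_nonneg _)
      linarith
    refine le_trans hdrop ?_
    -- Step 2: expand over the last step
    rw [sum_snoc]
    have hsn : ∀ (ω : Fin T → Fin n) (i : Fin n),
        pathWeight A (Fin.snoc ω i) *
          vnormSq (varSeq A b μ xmu (extendPath (Fin.snoc ω i)) (T+1) + (1 - μ) • xmu)
        = (pathWeight A ω * rowProb A i) *
            (μ^2 * vnormSq (projStep A i (varSeq A b μ xmu (extendPath ω) T))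
              + μ^2 * ((b i - A i ⬝ᵥ xmu)^2 / vnormSq (A i))) := by
      intro ω i
      rw [pathWeight_snoc, varSeq_extend_snoc, sub_add_cancel,
        step_normSq A (hrows i) μ (b i - A i ⬝ᵥ xmu) (varSeq A b μ xmu (extendPath ω) T)]
    rw [Finset.sum_congr rfl fun ω _ => Finset.sum_congr rfl fun i _ => hsn ω i]
    -- Step 3: bound projection norm and compute expectations
    have hbd : ∑ ω : Fin T → Fin n, ∑ i : Fin n, (pathWeight A ω * rowProb A i) *
            (μ^2 * vnormSq (projStep A i (varSeq A b μ xmu (extendPath ω) T))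
              + μ^2 * ((b i - A i ⬝ᵥ xmu)^2 / vnormSq (A i)))
        ≤ ∑ ω : Fin T → Fin n, ∑ i : Fin n, (pathWeight A ω * rowProb A i) *
            (μ^2 * vnormSq (varSeq A b μ xmu (extendPath ω) T)
              + μ^2 * ((b i - A i ⬝ᵥ xmu)^2 / vnormSq (A i))) := by
      refine Finset.sum_le_sum fun ω _ => Finset.sum_le_sum fun i _ => ?_
      refine mul_le_mul_of_nonneg_left ?_
        (mul_nonneg (pathWeight_nonneg A ω) (rowProb_nonneg A i))
      exact add_le_add_left
        (mul_le_mul_of_nonneg_left (vnormSq_projStep_le A (hrows i) _) (sq_nonneg μ)) _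
    refine le_trans hbd ?_
    have hinner : ∀ ω : Fin T → Fin n, ∑ i : Fin n, (pathWeight A ω * rowProb A i) *
            (μ^2 * vnormSq (varSeq A b μ xmu (extendPath ω) T)
              + μ^2 * ((b i - A i ⬝ᵥ xmu)^2 / vnormSq (A i)))
        = μ^2 * (pathWeight A ω * vnormSq (varSeq A b μ xmu (extendPath ω) T))
          + (μ^2 * (vnormSq (b - A *ᵥ xmu) / frobSq A)) * pathWeight A ω := by
      intro ω
      have : ∀ i : Fin n, (pathWeight A ω * rowProb A i) *
            (μ^2 * vnormSq (varSeq A b μ xmu (extendPath ω) T)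
              + μ^2 * ((b i - A i ⬝ᵥ xmu)^2 / vnormSq (A i)))
          = (μ^2 * (pathWeight A ω * vnormSq (varSeq A b μ xmu (extendPath ω) T))) * rowProb A i
            + (μ^2 * pathWeight A ω) * (rowProb A i * ((b i - A i ⬝ᵥ xmu)^2 / vnormSq (A i))) := by
        intro i; ring
      rw [Finset.sum_congr rfl fun i _ => this i, Finset.sum_add_distrib,
        ← Finset.mul_sum, ← Finset.mul_sum, sum_rowProb A hrows,
        sum_rowProb_res A hrows b xmu]
      ring
    rw [Finset.sum_congr rfl fun ω _ => hinner ω, Finset.sum_add_distrib,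
      ← Finset.mul_sum, ← Finset.mul_sum, sum_pathWeight A hrows T, mul_one]
    have hih := mul_le_mul_of_nonneg_left ih (sq_nonneg μ)
    have hfix : μ^2 * (μ ^ 2 / (1 - μ ^ 2) * (vnormSq (b - A *ᵥ xmu) / frobSq A))
          + μ^2 * (vnormSq (b - A *ᵥ xmu) / frobSq A)
        = μ ^ 2 / (1 - μ ^ 2) * (vnormSq (b - A *ᵥ xmu) / frobSq A) := by
      field_simp
      ring
    linarith

/-- the RK-RR variance sequence v_0 = 0,
v_{t+1} = μ(I - aaᵀ/‖a‖²)v_t + μ(b_i - aᵀx_μ)a/‖a‖² - (1-μ)x_μ satisfies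
E[v_t] = 0 and E‖v_t‖² ≤ (μ²/(1-μ²)) ‖b - Ax_μ‖²/‖A‖_F². -/
theorem rkrr_variance_bound {n d : ℕ} [NeZero n]
    (A : Matrix (Fin n) (Fin d) ℝ) (b : Fin n → ℝ) (hrows : ∀ i, A i ≠ 0)
    (μ : ℝ) (hμ0 : 0 < μ) (hμ1 : μ < 1)
    (lam : ℝ) (hlam : lam = (1 - μ) / μ * frobSq A)
    (xmu : Fin d → ℝ) (hxmu : Aᵀ *ᵥ (b - A *ᵥ xmu) = lam • xmu) :
    (∀ T : ℕ, ∑ ω : Fin T → Fin n, pathWeight A ω • varSeq A b μ xmu (extendPath ω) T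
        = (0 : Fin d → ℝ))
    ∧ (∀ T : ℕ, ∑ ω : Fin T → Fin n,
          pathWeight A ω * vnormSq (varSeq A b μ xmu (extendPath ω) T)
        ≤ μ ^ 2 / (1 - μ ^ 2) * (vnormSq (b - A *ᵥ xmu) / frobSq A)) :=
  ⟨mean_zero A b hrows μ hμ0 lam hlam xmu hxmu,
   var_bound A b hrows μ hμ0 hμ1 lam hlam xmu hxmu⟩
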